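/- Let X be a uniform space, d a uniformly continuous pseudo-metric on X, and (μ_i)_{i∈I} a Lévy net of Borel probability measures on X. For each i and each 1-Lipschitz function f : (X,d) → ℝ, let m_i(f) be a median of f with respect to μ_i. Then for every ε > 0, sup over 1-Lipschitz f of μ_i({x : |f(x) − m_i(f)| > ε}) converges to 0 along the net. -/

import Mathlib

open Filter Topology MeasureTheory

/-- A net `(μ i)` of Borel probability measures on a uniform space `X` is a Lévy net
if for every family `(B i)` of Borel sets with `liminf μ_i(B_i) > 0` and every open
entourage `U` of `X`, `μ_i(U[B_i]) → 1`. -/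
def LevyNet {X ι : Type*} [UniformSpace X] [MeasurableSpace X] (l : Filter ι)
    (μ : ι → Measure X) : Prop :=
  ∀ B : ι → Set X, (∀ i, MeasurableSet (B i)) →
    0 < l.liminf (fun i => μ i (B i)) →
    ∀ U ∈ uniformity X, IsOpen U →
      Tendsto (fun i => μ i {y | ∃ x ∈ B i, (x, y) ∈ U}) l (𝓝 1)

/-- From uniform continuity of `d` and `d x x = 0`: small entourages control `d`. -/
lemma ent_of_uc {X : Type*} [UniformSpace X] (d : X → X → ℝ) (hd0 : ∀ x, d x x = 0)
    (huc : UniformContinuous (fun p : X × X => d p.1 p.2)) {η : ℝ} (hη : 0 < η) :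
    ∃ W ∈ uniformity X, ∀ x y : X, (x, y) ∈ W → d x y < η := by
  have h1 : {r : ℝ × ℝ | dist r.1 r.2 < η} ∈ uniformity ℝ := Metric.dist_mem_uniformity hη
  have h2 : (fun x : (X × X) × X × X => (d x.1.1 x.1.2, d x.2.1 x.2.2)) ⁻¹'
      {r : ℝ × ℝ | dist r.1 r.2 < η} ∈ uniformity (X × X) := huc h1
  rw [uniformity_prod_eq_comap_prod, Filter.mem_comap] at h2
  obtain ⟨t, ht, hts⟩ := h2
  rw [Filter.mem_prod_iff] at ht
  obtain ⟨U₁, hU₁, U₂, hU₂, hsub⟩ := ht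
  refine ⟨U₂, hU₂, fun x y hxy => ?_⟩
  have hmem : (((x, x), (x, y)) : (X × X) × (X × X)) ∈
      (fun p : (X × X) × X × X => ((p.1.1, p.2.1), (p.1.2, p.2.2))) ⁻¹' (U₁ ×ˢ U₂) := by
    exact ⟨refl_mem_uniformity hU₁, hxy⟩
  have := hts (Set.mem_of_mem_of_subset hmem (Set.preimage_mono hsub))
  have : dist (d x x) (d x y) < η := this
  rw [hd0, Real.dist_eq] at this
  calc d x y ≤ |0 - d x y| := by rw [zero_sub, abs_neg]; exact le_abs_self _
    _ < η := this

/-- Key one-sided contradiction lemma. -/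
lemma levy_aux {X ι : Type*} [UniformSpace X] [MeasurableSpace X] [BorelSpace X]
    (l : Filter ι) (μ : ι → Measure X) (hprob : ∀ i, IsProbabilityMeasure (μ i))
    (hLevy : LevyNet l μ)
    (d : X → X → ℝ) (hd0 : ∀ x, d x x = 0)
    (huc : UniformContinuous (fun p : X × X => d p.1 p.2))
    (ε : ℝ) (hε : 0 < ε) (δ : ENNReal) (hδ : 0 < δ) (hδ1 : δ < 1)
    (g : ι → X → ℝ) (hg : ∀ i, ∀ x y, |g i x - g i y| ≤ d x y)
    (c : ι → ℝ) (hc : ∀ i, (1 / 2 : ENNReal) ≤ μ i {x | g i x ≤ c i})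
    (hfreq : ∃ᶠ i in l, δ / 2 ≤ μ i {x | c i + ε ≤ g i x}) : False := by
  classical
  -- g i is uniformly continuous, hence continuous
  have hgc : ∀ i, Continuous (g i) := by
    intro i
    refine UniformContinuous.continuous ?_
    intro s hs
    obtain ⟨η, hη, hball⟩ := Metric.mem_uniformity_dist.mp hs
    obtain ⟨W, hW, hWd⟩ := ent_of_uc d hd0 huc hη
    rw [Filter.mem_map]
    refine Filter.mem_of_superset hW ?_
    rintro ⟨x, y⟩ hxy
    have hdist : dist (g i x) (g i y) < η := by
      calc dist (g i x) (g i y) = |g i x - g i y| := Real.dist_eq _ _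
        _ ≤ d x y := hg i x y
        _ < η := hWd x y hxy
    exact hball hdist
  obtain ⟨U₀, hU₀, hU₀d⟩ := ent_of_uc d hd0 huc hε
  obtain ⟨U, ⟨hU, hUopen⟩, hUsub⟩ := uniformity_hasBasis_open.mem_iff.mp hU₀
  set B : ι → Set X := fun i =>
    if δ / 2 ≤ μ i {x | c i + ε ≤ g i x} then {x | c i + ε ≤ g i x} else Set.univ with hB
  have hBmeas : ∀ i, MeasurableSet (B i) := by
    intro i
    simp only [hB]
    split_ifs
    · exact (isClosed_le continuous_const (hgc i)).measurableSet
    · exact MeasurableSet.univ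
  have hlow : ∀ i, δ / 2 ≤ μ i (B i) := by
    intro i
    simp only [hB]
    split_ifs with h
    · exact h
    · simp only [measure_univ]
      calc δ / 2 ≤ δ := ENNReal.half_le_self
        _ ≤ 1 := hδ1.le
  have hliminf : 0 < l.liminf (fun i => μ i (B i)) := by
    have h2 : 0 < δ / 2 := ENNReal.half_pos hδ.ne'
    exact lt_of_lt_of_le h2 (Filter.le_liminf_of_le (by isBoundedDefault)
      (Filter.Eventually.of_forall hlow))
  have htend := hLevy B hBmeas hliminf U hU hUopen
  have hev : ∀ᶠ i in l, (1 / 2 : ENNReal) < μ i {y | ∃ x ∈ B i, (x, y) ∈ U} :=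
    htend.eventually (eventually_gt_nhds (by norm_num))
  obtain ⟨i, hSi, h2i⟩ := (hfreq.and_eventually hev).exists
  have hBi : B i = {x | c i + ε ≤ g i x} := if_pos hSi
  -- the enlargement avoids {g ≤ c}
  have hsub2 : {y | ∃ x ∈ B i, (x, y) ∈ U} ⊆ {x | g i x ≤ c i}ᶜ := by
    rintro y ⟨x, hx, hxy⟩
    rw [hBi] at hx
    have hx' : c i + ε ≤ g i x := hx
    have hdxy : d x y < ε := hU₀d x y (hUsub hxy)
    have habs : |g i x - g i y| < ε := lt_of_le_of_lt (hg i x y) hdxy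
    have hgy : c i < g i y := by
      have h' := (abs_lt.mp habs).2
      linarith
    simp only [Set.mem_compl_iff, Set.mem_setOf_eq, not_le]
    exact hgy
  have hmeasle : MeasurableSet {x | g i x ≤ c i} :=
    (isClosed_le (hgc i) continuous_const).measurableSet
  have := hprob i
  have hsum : μ i {x | g i x ≤ c i} + μ i {x | g i x ≤ c i}ᶜ = 1 :=
    prob_add_prob_compl hmeasle
  have hstrict : (1 / 2 : ENNReal) < μ i {x | g i x ≤ c i}ᶜ :=
    lt_of_lt_of_le h2i (measure_mono hsub2)
  have hlt : (1 : ENNReal) < 1 := by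
    calc (1 : ENNReal) = 1 / 2 + 1 / 2 := (ENNReal.add_halves 1).symm
      _ < μ i {x | g i x ≤ c i}ᶜ + μ i {x | g i x ≤ c i} :=
        ENNReal.add_lt_add_of_lt_of_le (by norm_num) hstrict (hc i)
      _ = 1 := by rw [add_comm]; exact hsum
  exact lt_irrefl _ hlt

/-- Gromov–Milman: along a Lévy net, 1-Lipschitz functions (for a uniformly continuous
pseudo-metric `d`) concentrate around their medians, uniformly over all such functions. -/
theorem stmt14 {X ι : Type*} [UniformSpace X] [MeasurableSpace X] [BorelSpace X]
    (l : Filter ι) (μ : ι → Measure X) (hprob : ∀ i, IsProbabilityMeasure (μ i))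
    (hLevy : LevyNet l μ)
    (d : X → X → ℝ) (hd0 : ∀ x, d x x = 0) (hsymm : ∀ x y, d x y = d y x)
    (htri : ∀ x y z, d x z ≤ d x y + d y z)
    (huc : UniformContinuous (fun p : X × X => d p.1 p.2))
    (m : ι → (X → ℝ) → ℝ)
    (hm : ∀ i, ∀ f : X → ℝ, (∀ x y, |f x - f y| ≤ d x y) →
      (1 / 2 : ENNReal) ≤ μ i {x | m i f ≤ f x} ∧
      (1 / 2 : ENNReal) ≤ μ i {x | f x ≤ m i f})
    (ε : ℝ) (hε : 0 < ε) :
    ∀ δ : ENNReal, 0 < δ → ∀ᶠ i in l, ∀ f : X → ℝ,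
      (∀ x y, |f x - f y| ≤ d x y) →
      μ i {x | ε < |f x - m i f|} ≤ δ := by
  classical
  have hdnn : ∀ x y, 0 ≤ d x y := by
    intro x y
    have := htri x y x
    rw [hd0, hsymm y x] at this
    linarith
  intro δ hδ
  by_cases h1 : 1 ≤ δ
  · refine Filter.Eventually.of_forall fun i f _ => ?_
    have := hprob i
    exact le_trans prob_le_one h1
  push_neg at h1
  by_contra hcon
  rw [Filter.not_eventually] at hcon
  -- choose witnesses
  set P : ι → Prop := fun i => ∃ f : X → ℝ, (∀ x y, |f x - f y| ≤ d x y) ∧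
    ¬ μ i {x | ε < |f x - m i f|} ≤ δ with hP
  have hfreqP : ∃ᶠ i in l, P i := by
    refine hcon.mono fun i hi => ?_
    push_neg at hi
    obtain ⟨f, hf, hfd⟩ := hi
    exact ⟨f, hf, not_le.mpr hfd⟩
  set F : ι → X → ℝ := fun i => if h : P i then h.choose else fun _ => 0 with hF
  have hFlip : ∀ i, ∀ x y, |F i x - F i y| ≤ d x y := by
    intro i x y
    simp only [hF]
    split_ifs with h
    · exact h.choose_spec.1 x y
    · simpa using hdnn x y
  have hFbig : ∀ i, P i → δ < μ i {x | ε < |F i x - m i (F i)|} := by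
    intro i h
    have : F i = h.choose := by simp only [hF]; exact dif_pos h
    rw [this]
    exact not_le.mp h.choose_spec.2
  -- split into two sides
  have hsplit : ∀ i, P i →
      δ / 2 ≤ μ i {x | m i (F i) + ε ≤ F i x} ∨
      δ / 2 ≤ μ i {x | -(m i (F i)) + ε ≤ -(F i x)} := by
    intro i hi
    by_contra hboth
    push_neg at hboth
    obtain ⟨hA, hB⟩ := hboth
    have hsubAB : {x | ε < |F i x - m i (F i)|} ⊆
        {x | m i (F i) + ε ≤ F i x} ∪ {x | -(m i (F i)) + ε ≤ -(F i x)} := by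
      intro x hx
      have hx' : ε < |F i x - m i (F i)| := hx
      rcases le_or_gt 0 (F i x - m i (F i)) with hpos | hneg
      · left
        have habs := abs_of_nonneg hpos
        rw [habs] at hx'
        simp only [Set.mem_setOf_eq]
        linarith
      · right
        have habs := abs_of_neg hneg
        rw [habs] at hx'
        simp only [Set.mem_setOf_eq]
        linarith
    have hle : μ i {x | ε < |F i x - m i (F i)|} ≤
        μ i {x | m i (F i) + ε ≤ F i x} + μ i {x | -(m i (F i)) + ε ≤ -(F i x)} :=
      (measure_mono hsubAB).trans (measure_union_le _ _)
    have : δ < δ / 2 + δ / 2 :=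
      lt_of_lt_of_le (hFbig i hi) (hle.trans (add_le_add hA.le hB.le))
    rw [ENNReal.add_halves] at this
    exact lt_irrefl _ this
  have hfreq2 : (∃ᶠ i in l, δ / 2 ≤ μ i {x | m i (F i) + ε ≤ F i x}) ∨
      (∃ᶠ i in l, δ / 2 ≤ μ i {x | -(m i (F i)) + ε ≤ -(F i x)}) := by
    rw [← Filter.frequently_or_distrib]
    exact hfreqP.mono hsplit
  rcases hfreq2 with h | h
  · exact levy_aux l μ hprob hLevy d hd0 huc ε hε δ hδ h1
      (fun i => F i) hFlip (fun i => m i (F i))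
      (fun i => (hm i (F i) (hFlip i)).2) h
  · refine levy_aux l μ hprob hLevy d hd0 huc ε hε δ hδ h1
      (fun i x => -(F i x)) ?_ (fun i => -(m i (F i))) ?_ h
    · intro i x y
      rw [show -(F i x) - -(F i y) = -(F i x - F i y) by ring, abs_neg]
      exact hFlip i x y
    · intro i
      have := (hm i (F i) (hFlip i)).1
      convert this using 2
      ext x
      simp only [Set.mem_setOf_eq, neg_le_neg_iff]
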